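/- Let ψ: [0,∞) → ℝ be continuous and bounded, with ‖ψ‖ = sup_{t≥0} |ψ(t)|, and let a > 0. For every n ≥ 1 and every x ∈ [0,a], |K_n^μ(ψ; x) − ψ(x)| ≤ (3/4)(2 + a + s²) w₂(ψ; s) + (2s²/a) ‖ψ‖, where s = (K_n^μ((ξ−x)²; x))^{1/4} and w₂ is the second-order modulus of continuity. -/

import Mathlib

open scoped BigOperators

/-- The Dunkl coefficients γ_μ(i). -/
noncomputable def gammaMu (μ : ℝ) (i : ℕ) : ℝ :=
  if Even i then
    2 ^ i * (Nat.factorial (i / 2)) *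
      Real.Gamma (((i / 2 : ℕ) : ℝ) + μ + 1 / 2) / Real.Gamma (μ + 1 / 2)
  else
    2 ^ i * (Nat.factorial (i / 2)) *
      Real.Gamma (((i / 2 : ℕ) : ℝ) + μ + 3 / 2) / Real.Gamma (μ + 1 / 2)

/-- θ_i = 0 if i is even, 1 if i is odd. -/
noncomputable def thetaFn (i : ℕ) : ℝ := if Even i then 0 else 1

/-- The Dunkl exponential e_μ(x) = Σ x^i / γ_μ(i). -/
noncomputable def dunklExp (μ : ℝ) (x : ℝ) : ℝ := ∑' i : ℕ, x ^ i / gammaMu μ i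

/-- The Dunkl operator (Λ_μ f)(x) = f'(x) + μ (f(x) - f(-x)) / x. -/
noncomputable def dunklOp (μ : ℝ) (f : ℝ → ℝ) (x : ℝ) : ℝ :=
  deriv f x + μ * (f x - f (-x)) / x

/-- Q(t) = Σ c_i t^i / γ_μ(i). -/
noncomputable def Qf (μ : ℝ) (c : ℕ → ℝ) (t : ℝ) : ℝ := ∑' i : ℕ, c i * t ^ i / gammaMu μ i

/-- The Dunkl–Appell polynomials q_i(x) = Σ_{j=0}^i (γ_μ(i)/(γ_μ(j)γ_μ(i-j))) c_{i-j} x^j. -/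
noncomputable def qPoly (μ : ℝ) (c : ℕ → ℝ) (i : ℕ) (x : ℝ) : ℝ :=
  ∑ j ∈ Finset.range (i + 1),
    gammaMu μ i / (gammaMu μ j * gammaMu μ (i - j)) * c (i - j) * x ^ j

/-- The operators K_n^μ(f;x). -/
noncomputable def Kop (μ : ℝ) (c : ℕ → ℝ) (n : ℕ) (f : ℝ → ℝ) (x : ℝ) : ℝ :=
  1 / (Qf μ c 1 * dunklExp μ (n * x)) *
    ∑' i : ℕ, qPoly μ c i (n * x) / gammaMu μ i * f (((i : ℝ) + 2 * μ * thetaFn i) / n)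

/-- The second-order modulus of continuity of ψ on [0,∞). -/
noncomputable def modulusOfContinuity2 (ψ : ℝ → ℝ) (δ : ℝ) : ℝ :=
  sSup {y : ℝ | ∃ t h : ℝ, 0 ≤ t ∧ 0 ≤ h ∧ h ≤ δ ∧ y = |ψ (t + 2 * h) - 2 * ψ (t + h) + ψ t|}


variable {μ : ℝ}

lemma gammaMu_pos (hμ : 0 ≤ μ) (i : ℕ) : 0 < gammaMu μ i := by
  have h0 : (0:ℝ) < Real.Gamma (μ + 1/2) := Real.Gamma_pos_of_pos (by linarith)
  unfold gammaMu
  split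
  · apply div_pos _ h0
    have : (0:ℝ) < Real.Gamma (((i / 2 : ℕ) : ℝ) + μ + 1 / 2) :=
      Real.Gamma_pos_of_pos (by positivity)
    positivity
  · apply div_pos _ h0
    have : (0:ℝ) < Real.Gamma (((i / 2 : ℕ) : ℝ) + μ + 3 / 2) :=
      Real.Gamma_pos_of_pos (by positivity)
    positivity

lemma gammaMu_zero (hμ : 0 ≤ μ) : gammaMu μ 0 = 1 := by
  have h0 : (0:ℝ) < Real.Gamma (μ + 1/2) := Real.Gamma_pos_of_pos (by linarith)
  simp only [gammaMu, if_pos Even.zero, Nat.zero_div, Nat.factorial_zero, pow_zero,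
    Nat.cast_one, Nat.cast_zero, zero_add, one_mul, mul_one]
  exact div_self h0.ne'

lemma gammaMu_succ_ge (hμ : 0 ≤ μ) (i : ℕ) :
    ((i:ℝ) + 1) * gammaMu μ i ≤ gammaMu μ (i + 1) := by
  have h0 : (0:ℝ) < Real.Gamma (μ + 1/2) := Real.Gamma_pos_of_pos (by linarith)
  rcases Nat.even_or_odd i with he | ho
  · obtain ⟨k, hk⟩ := he
    subst hk
    have hd1 : (k + k) / 2 = k := by omega
    have hd2 : (k + k + 1) / 2 = k := by omega
    have hne : ¬ Even (k + k + 1) := by simp [Nat.even_add_one, Nat.even_add]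
    have hΓa : (0:ℝ) < Real.Gamma ((k:ℝ) + μ + 1/2) := Real.Gamma_pos_of_pos (by positivity)
    have hgam : Real.Gamma (((k:ℝ)) + μ + 3/2) = ((k:ℝ) + μ + 1/2) * Real.Gamma ((k:ℝ) + μ + 1/2) := by
      have := Real.Gamma_add_one (s := (k:ℝ) + μ + 1/2) (by positivity)
      rw [show ((k:ℝ) + μ + 1/2) + 1 = (k:ℝ) + μ + 3/2 by ring] at this
      exact this
    have h1 : Even (k + k) := ⟨k, rfl⟩
    simp only [gammaMu, if_pos h1, if_neg hne, hd1, hd2]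
    rw [hgam, ← mul_div_assoc, div_le_div_iff_of_pos_right h0]
    have hX : (0:ℝ) < 2^(k+k) * (Nat.factorial k) := by positivity
    rw [pow_succ]
    push_cast
    nlinarith [mul_nonneg (mul_nonneg hX.le hΓa.le) hμ]
  · obtain ⟨k, hk⟩ := ho
    subst hk
    have hd1 : (2*k + 1) / 2 = k := by omega
    have hd2 : (2*k + 1 + 1) / 2 = k + 1 := by omega
    have hne : ¬ Even (2*k + 1) := by simp [Nat.even_add_one]
    have heq : (((k+1:ℕ)):ℝ) + μ + 1/2 = (k:ℝ) + μ + 3/2 := by push_cast; ring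
    have h1 : Even (2*k+1+1) := ⟨k+1, by ring⟩
    simp only [gammaMu, if_pos h1, if_neg hne, hd1, hd2]
    rw [heq, ← mul_div_assoc, div_le_div_iff_of_pos_right h0]
    apply le_of_eq
    push_cast [Nat.factorial_succ, pow_succ]
    ring

lemma factorial_le_gammaMu (hμ : 0 ≤ μ) (i : ℕ) : (Nat.factorial i : ℝ) ≤ gammaMu μ i := by
  induction i with
  | zero => simp [gammaMu_zero hμ]
  | succ m ih =>
    calc (Nat.factorial (m+1) : ℝ) = ((m:ℝ)+1) * (Nat.factorial m) := by
          push_cast [Nat.factorial_succ]; ring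
    _ ≤ ((m:ℝ)+1) * gammaMu μ m := by
          apply mul_le_mul_of_nonneg_left ih (by positivity)
    _ ≤ gammaMu μ (m+1) := gammaMu_succ_ge hμ m

lemma summable_abs_pow_div_gammaMu (hμ : 0 ≤ μ) {y : ℝ} (hy : 0 ≤ y) :
    Summable (fun i : ℕ => |y ^ i / gammaMu μ i|) := by
  apply Summable.of_nonneg_of_le (fun i => abs_nonneg _) (fun i => ?_) (Real.summable_pow_div_factorial y)
  have hg := gammaMu_pos hμ i
  rw [abs_of_nonneg (div_nonneg (pow_nonneg hy i) hg.le)]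
  have hfac : (0:ℝ) < (Nat.factorial i : ℝ) := by exact_mod_cast Nat.factorial_pos i
  gcongr
  exact factorial_le_gammaMu hμ i

section Pointwise

variable (ψ : ℝ → ℝ) (M ω a h : ℝ)

/-- difference of step-h increments grows at most like k·ω -/
lemma chainB (hh : 0 < h)
    (hω : ∀ τ g : ℝ, 0 ≤ τ → 0 ≤ g → g ≤ h → |ψ (τ + 2*g) - 2 * ψ (τ + g) + ψ τ| ≤ ω)
    {z : ℝ} (hz : 0 ≤ z) (k : ℕ) :
    |(ψ (z + k*h + h) - ψ (z + k*h)) - (ψ (z + h) - ψ z)| ≤ k * ω := by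
  induction k with
  | zero => simp
  | succ m ih =>
    have hstep : |ψ (z + m*h + 2*h) - 2 * ψ (z + m*h + h) + ψ (z + m*h)| ≤ ω := by
      have := hω (z + m*h) h (by positivity) hh.le le_rfl
      rw [show z + m*h + 2*h = z + m*h + 2*h by ring] at this
      convert this using 3 <;> ring
    have key : ψ (z + (m+1:ℕ)*h + h) - ψ (z + (m+1:ℕ)*h) - (ψ (z + h) - ψ z)
        = (ψ (z + m*h + 2*h) - 2 * ψ (z + m*h + h) + ψ (z + m*h))
          + ((ψ (z + m*h + h) - ψ (z + m*h)) - (ψ (z + h) - ψ z)) := by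
      push_cast; ring_nf
    rw [key]
    calc |_ + _| ≤ ω + m * ω := by
          refine (abs_add_le _ _).trans (add_le_add hstep ih)
    _ = (m+1:ℕ) * ω := by push_cast; ring

/-- telescoping + chainB: m-step deviation -/
lemma mstep (hh : 0 < h)
    (hω : ∀ τ g : ℝ, 0 ≤ τ → 0 ≤ g → g ≤ h → |ψ (τ + 2*g) - 2 * ψ (τ + g) + ψ τ| ≤ ω)
    {z : ℝ} (hz : 0 ≤ z) (m : ℕ) :
    |(m:ℝ) * (ψ (z + h) - ψ z) - (ψ (z + m*h) - ψ z)| ≤ (m:ℝ) * ((m:ℝ) - 1)/2 * ω := by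
  induction m with
  | zero => simp
  | succ m ih =>
    have hc := chainB ψ ω h hh hω hz m
    have key : ((m:ℝ)+1) * (ψ (z + h) - ψ z) - (ψ (z + ((m:ℝ)+1)*h) - ψ z)
        = ((m:ℝ) * (ψ (z + h) - ψ z) - (ψ (z + m*h) - ψ z))
          - ((ψ (z + m*h + h) - ψ (z + m*h)) - (ψ (z + h) - ψ z)) := by
      ring_nf
    push_cast
    rw [key]
    calc |_ - _| ≤ (m:ℝ) * ((m:ℝ)-1)/2 * ω + m * ω := by
          refine (abs_sub _ _).trans (add_le_add ih hc)
    _ = ((m:ℝ)+1) * (((m:ℝ)+1) - 1)/2 * ω := by ring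

lemma stepBound (ha : 0 < a) (hh : 0 < h) (hM : ∀ t, 0 ≤ t → |ψ t| ≤ M)
    (hω : ∀ τ g : ℝ, 0 ≤ τ → 0 ≤ g → g ≤ h → |ψ (τ + 2*g) - 2 * ψ (τ + g) + ψ τ| ≤ ω)
    (hω0 : 0 ≤ ω) {z : ℝ} (hz : 0 ≤ z) :
    |ψ (z + h) - ψ z| ≤ 2*M*h/a + a/(2*h)*ω := by
  set m := ⌈a/h⌉₊ with hm
  have hq : 0 < a/h := by positivity
  have hm1 : 0 < m := Nat.ceil_pos.mpr hq
  have hma : a/h ≤ (m:ℝ) := Nat.le_ceil _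
  have hmb : (m:ℝ) < a/h + 1 := Nat.ceil_lt_add_one hq.le
  have hmpos : (0:ℝ) < m := by exact_mod_cast hm1
  have hM0 : 0 ≤ M := le_trans (abs_nonneg _) (hM z hz)
  have hstep := mstep ψ ω h hh hω hz m
  have hbd : |ψ (z + m*h) - ψ z| ≤ 2*M := by
    have h1 := hM (z + m*h) (by positivity)
    have h2 := hM z hz
    calc |ψ (z + m*h) - ψ z| ≤ |ψ (z+m*h)| + |ψ z| := abs_sub _ _
    _ ≤ 2*M := by linarith
  have key : (m:ℝ) * |ψ (z + h) - ψ z| ≤ 2*M + (m:ℝ)*((m:ℝ)-1)/2 * ω := by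
    have habs := abs_add_le ((m:ℝ)*(ψ (z+h) - ψ z) - (ψ (z+m*h) - ψ z)) (ψ (z+m*h) - ψ z)
    rw [show ((m:ℝ)*(ψ (z+h) - ψ z) - (ψ (z+m*h) - ψ z)) + (ψ (z+m*h) - ψ z)
        = (m:ℝ)*(ψ (z+h) - ψ z) by ring] at habs
    rw [abs_mul, abs_of_pos hmpos] at habs
    linarith [hstep, hbd]
  have t1 : 2*M ≤ (m:ℝ)*(2*M*h/a) := by
    have h1 : a ≤ (m:ℝ)*h := by
      rw [div_le_iff₀ hh] at hma; linarith
    rw [show (m:ℝ)*(2*M*h/a) = (2*M)*(((m:ℝ)*h)/a) by ring]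
    have h2 : (1:ℝ) ≤ ((m:ℝ)*h)/a := by rw [le_div_iff₀ ha]; linarith
    nlinarith
  have t2 : (m:ℝ)*((m:ℝ)-1)/2*ω ≤ (m:ℝ)*(a/(2*h)*ω) := by
    have h1 : (m:ℝ)-1 ≤ a/h := by linarith
    have h2 : ((m:ℝ)-1)/2*ω ≤ a/(2*h)*ω := by
      apply mul_le_mul_of_nonneg_right _ hω0
      rw [show a/(2*h) = (a/h)/2 by ring]
      linarith
    calc (m:ℝ)*((m:ℝ)-1)/2*ω = (m:ℝ)*(((m:ℝ)-1)/2*ω) := by ring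
    _ ≤ (m:ℝ)*(a/(2*h)*ω) := mul_le_mul_of_nonneg_left h2 hmpos.le
  have final : (m:ℝ) * |ψ (z + h) - ψ z| ≤ (m:ℝ) * (2*M*h/a + a/(2*h)*ω) := by
    calc (m:ℝ) * |ψ (z + h) - ψ z| ≤ 2*M + (m:ℝ)*((m:ℝ)-1)/2 * ω := key
    _ ≤ (m:ℝ)*(2*M*h/a) + (m:ℝ)*(a/(2*h)*ω) := add_le_add t1 t2
    _ = (m:ℝ) * (2*M*h/a + a/(2*h)*ω) := by ring
  exact le_of_mul_le_mul_left final hmpos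

lemma whitney (hh : 0 < h) (hM : ∀ t, 0 ≤ t → |ψ t| ≤ M)
    (hω : ∀ τ g : ℝ, 0 ≤ τ → 0 ≤ g → g ≤ h → |ψ (τ + 2*g) - 2 * ψ (τ + g) + ψ τ| ≤ ω)
    {z r : ℝ} (hz : 0 ≤ z) (hr0 : 0 ≤ r) (hrh : r ≤ h) :
    |ψ (z + r) - ψ z - r/h * (ψ (z + h) - ψ z)| ≤ ω := by
  set e : ℝ → ℝ := fun v => ψ (z + v) - ψ z - v/h * (ψ (z + h) - ψ z) with he
  set S := sSup ((fun v => |e v|) '' Set.Icc 0 h) with hS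
  have hM0 : 0 ≤ M := le_trans (abs_nonneg _) (hM z hz)
  have hbdd : ∀ v ∈ Set.Icc (0:ℝ) h, |e v| ≤ 4*M := by
    intro v hv
    have h1 := hM (z+v) (by linarith [hv.1])
    have h2 := hM z hz
    have h3 := hM (z+h) (by linarith)
    have hvh : |v/h| ≤ 1 := by
      rw [abs_div, abs_of_nonneg hv.1, abs_of_pos hh]
      exact (div_le_one hh).mpr hv.2
    have e1 : |e v| ≤ |ψ (z+v) - ψ z| + |v/h| * |ψ (z+h) - ψ z| := by
      rw [he]; dsimp only
      rw [← abs_mul]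
      exact abs_sub _ _
    have e2 : |ψ (z+v) - ψ z| ≤ 2*M := le_trans (abs_sub _ _) (by linarith)
    have e3 : |ψ (z+h) - ψ z| ≤ 2*M := le_trans (abs_sub _ _) (by linarith)
    calc |e v| ≤ |ψ (z+v) - ψ z| + |v/h| * |ψ (z+h) - ψ z| := e1
    _ ≤ 2*M + 1 * (2*M) := add_le_add e2 (mul_le_mul hvh e3 (abs_nonneg _) one_pos.le)
    _ = 4*M := by ring
  have hne : ((fun v => |e v|) '' Set.Icc 0 h).Nonempty :=
    ⟨|e 0|, ⟨0, ⟨le_rfl, hh.le⟩, rfl⟩⟩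
  have hbddA : BddAbove ((fun v => |e v|) '' Set.Icc 0 h) := by
    refine ⟨4*M, ?_⟩
    rintro y ⟨v, hv, rfl⟩
    exact hbdd v hv
  have hle : ∀ v ∈ Set.Icc (0:ℝ) h, |e v| ≤ S := fun v hv => le_csSup hbddA ⟨v, hv, rfl⟩
  have hkey : ∀ v ∈ Set.Icc (0:ℝ) h, |e v| ≤ S/2 + ω/2 := by
    intro v hv
    rcases le_or_gt v (h/2) with hv2 | hv2
    · have hid : e (2*v) - 2*(e v) = ψ (z + 2*v) - 2*ψ (z + v) + ψ z := by
        rw [he]; dsimp only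
        field_simp
        ring
      have hd : |ψ (z + 2*v) - 2*ψ (z + v) + ψ z| ≤ ω := hω z v hz hv.1 (le_trans hv2 (by linarith))
      have h2v : |e (2*v)| ≤ S := hle _ ⟨by linarith [hv.1], by linarith⟩
      have hev : e v = (e (2*v) - (ψ (z + 2*v) - 2*ψ (z + v) + ψ z))/2 := by
        linear_combination (-(1:ℝ)/2) * hid
      rw [hev]
      rw [abs_div, abs_two]
      have : |e (2*v) - (ψ (z + 2*v) - 2*ψ (z + v) + ψ z)| ≤ S + ω :=
        le_trans (abs_sub _ _) (add_le_add h2v hd)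
      linarith
    · set w := h - v with hw
      have hw0 : 0 ≤ w := by simp only [hw]; linarith [hv.2]
      have hwh : w < h/2 := by simp only [hw]; linarith
      have hid : e (h - 2*w) - 2*(e (h - w))
          = ψ ((z + (h - 2*w)) + 2*w) - 2*ψ ((z + (h - 2*w)) + w) + ψ (z + (h - 2*w)) := by
        rw [he]; dsimp only
        field_simp
        ring
      have hd : |ψ ((z + (h - 2*w)) + 2*w) - 2*ψ ((z + (h - 2*w)) + w) + ψ (z + (h - 2*w))| ≤ ω :=
        hω (z + (h - 2*w)) w (by linarith) hw0 (by linarith)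
      have h2v : |e (h - 2*w)| ≤ S := hle _ ⟨by linarith, by linarith⟩
      have hveq : v = h - w := by simp only [hw]; ring
      have hev : e v = (e (h - 2*w) - (ψ ((z + (h - 2*w)) + 2*w) - 2*ψ ((z + (h - 2*w)) + w) + ψ (z + (h - 2*w))))/2 := by
        rw [hveq]; linear_combination (-(1:ℝ)/2) * hid
      rw [hev, abs_div, abs_two]
      have : |e (h - 2*w) - (ψ ((z + (h - 2*w)) + 2*w) - 2*ψ ((z + (h - 2*w)) + w) + ψ (z + (h - 2*w)))| ≤ S + ω :=
        le_trans (abs_sub _ _) (add_le_add h2v hd)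
      linarith
  have hSle : S ≤ S/2 + ω/2 := by
    apply csSup_le hne
    rintro y ⟨v, hv, rfl⟩
    exact hkey v hv
  exact le_trans (hle r ⟨hr0, hrh⟩) (by linarith)

set_option maxHeartbeats 1000000 in
lemma pointwise_est (ha : 0 < a) (hh : 0 < h) (hM : ∀ t, 0 ≤ t → |ψ t| ≤ M)
    (hω : ∀ τ g : ℝ, 0 ≤ τ → 0 ≤ g → g ≤ h → |ψ (τ + 2*g) - 2 * ψ (τ + g) + ψ τ| ≤ ω)
    {z L : ℝ} (hz : 0 ≤ z) (hL : 0 ≤ L) :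
    |ψ (z + L) - ψ z| ≤ ω + (2*M/a + a/(2*h^2)*ω) * L + ω/(2*h^2) * L^2 := by
  have hω0 : 0 ≤ ω := by
    have := hω 0 0 le_rfl le_rfl hh.le
    have h0 : |ψ (0 + 2*0) - 2 * ψ (0 + 0) + ψ 0| = |ψ 0 - 2 * ψ 0 + ψ 0| := by norm_num
    rw [h0] at this
    calc (0:ℝ) ≤ |ψ 0 - 2 * ψ 0 + ψ 0| := abs_nonneg _
    _ ≤ ω := this
  have hM0 : 0 ≤ M := le_trans (abs_nonneg _) (hM z hz)
  set K := ⌊L/h⌋₊ with hKdef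
  have hKle : (K:ℝ) ≤ L/h := Nat.floor_le (by positivity)
  have hKgt : L/h < (K:ℝ) + 1 := Nat.lt_floor_add_one (L/h)
  have hKh : (K:ℝ)*h ≤ L := by rw [le_div_iff₀ hh] at hKle; linarith [hKle]
  have hLK : L < ((K:ℝ)+1)*h := by rw [div_lt_iff₀ hh] at hKgt; linarith [hKgt]
  set r := L - (K:ℝ)*h with hrdef
  have hr0 : 0 ≤ r := by simp only [hrdef]; linarith
  have hrh : r ≤ h := by simp only [hrdef]; nlinarith
  set Δ := ψ (z + h) - ψ z with hΔ
  have hstep : |Δ| ≤ 2*M*h/a + a/(2*h)*ω := stepBound ψ M ω a h ha hh hM hω hω0 hz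
  have hA : |(K:ℝ)*Δ - (ψ (z + K*h) - ψ z)| ≤ (K:ℝ)*((K:ℝ)-1)/2 * ω := mstep ψ ω h hh hω hz K
  have hchain : |(ψ (z + K*h + h) - ψ (z + K*h)) - Δ| ≤ (K:ℝ) * ω := chainB ψ ω h hh hω hz K
  have hzK : (0:ℝ) ≤ z + K*h := by positivity
  have hwhit : |ψ ((z + K*h) + r) - ψ (z + K*h) - r/h * (ψ ((z + K*h) + h) - ψ (z + K*h))| ≤ ω :=
    whitney ψ M ω h hh hM hω hzK hr0 hrh
  have hzL : z + L = (z + (K:ℝ)*h) + r := by simp only [hrdef]; ring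
  have hsplit : ψ (z + L) - ψ z
      = -((K:ℝ)*Δ - (ψ (z + K*h) - ψ z))
        + (ψ ((z + K*h) + r) - ψ (z + K*h) - r/h * (ψ ((z + K*h) + h) - ψ (z + K*h)))
        + (r/h) * ((ψ (z + K*h + h) - ψ (z + K*h)) - Δ)
        + ((K:ℝ) + r/h) * Δ := by
    rw [hzL]; ring_nf
  have hrh0 : 0 ≤ r/h := by positivity
  have habs : |ψ (z + L) - ψ z| ≤ (K:ℝ)*((K:ℝ)-1)/2 * ω + ω + (r/h)*((K:ℝ)*ω)
      + ((K:ℝ) + r/h) * |Δ| := by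
    rw [hsplit]
    have t1 := abs_add_le (-((K:ℝ)*Δ - (ψ (z + K*h) - ψ z))
        + (ψ ((z + K*h) + r) - ψ (z + K*h) - r/h * (ψ ((z + K*h) + h) - ψ (z + K*h)))
        + (r/h) * ((ψ (z + K*h + h) - ψ (z + K*h)) - Δ)) (((K:ℝ) + r/h) * Δ)
    have t2 := abs_add_le (-((K:ℝ)*Δ - (ψ (z + K*h) - ψ z))
        + (ψ ((z + K*h) + r) - ψ (z + K*h) - r/h * (ψ ((z + K*h) + h) - ψ (z + K*h))))
        ((r/h) * ((ψ (z + K*h + h) - ψ (z + K*h)) - Δ))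
    have t3 := abs_add_le (-((K:ℝ)*Δ - (ψ (z + K*h) - ψ z)))
        (ψ ((z + K*h) + r) - ψ (z + K*h) - r/h * (ψ ((z + K*h) + h) - ψ (z + K*h)))
    have e1 : |-((K:ℝ)*Δ - (ψ (z + K*h) - ψ z))| ≤ (K:ℝ)*((K:ℝ)-1)/2 * ω := by
      rw [abs_neg]; exact hA
    have e3 : |(r/h) * ((ψ (z + K*h + h) - ψ (z + K*h)) - Δ)| ≤ (r/h)*((K:ℝ)*ω) := by
      rw [abs_mul, abs_of_nonneg hrh0]
      exact mul_le_mul_of_nonneg_left hchain hrh0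
    have e4 : |((K:ℝ) + r/h) * Δ| = ((K:ℝ) + r/h) * |Δ| := by
      rw [abs_mul, abs_of_nonneg (by positivity)]
    linarith [hwhit]
  have hKr : (K:ℝ) + r/h = L/h := by
    field_simp [hrdef]
    linarith [hrdef]
  have quad : (K:ℝ)*((K:ℝ)-1)/2 * ω + (r/h)*((K:ℝ)*ω) ≤ ω/(2*h^2) * L^2 := by
    have hLh : L/h = (K:ℝ) + r/h := hKr.symm
    have hL2 : ω/(2*h^2) * L^2 = (L/h)^2/2 * ω := by
      field_simp
    rw [hL2, hLh]
    have hKnn : (0:ℝ) ≤ (K:ℝ) := Nat.cast_nonneg K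
    nlinarith [sq_nonneg (r/h), mul_nonneg (mul_nonneg hrh0 hrh0) hω0, mul_nonneg hKnn hω0]
  have lin : ((K:ℝ) + r/h) * |Δ| ≤ (2*M/a + a/(2*h^2)*ω) * L := by
    rw [hKr]
    have h1 : (L/h) * |Δ| ≤ (L/h) * (2*M*h/a + a/(2*h)*ω) :=
      mul_le_mul_of_nonneg_left hstep (by positivity)
    have h2 : (L/h) * (2*M*h/a + a/(2*h)*ω) = (2*M/a + a/(2*h^2)*ω) * L := by
      field_simp
    linarith
  linarith [habs, quad, lin]


lemma pointwise_est' (ha : 0 < a) (hh : 0 < h) (hM : ∀ t, 0 ≤ t → |ψ t| ≤ M)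
    (hω : ∀ τ g : ℝ, 0 ≤ τ → 0 ≤ g → g ≤ h → |ψ (τ + 2*g) - 2 * ψ (τ + g) + ψ τ| ≤ ω)
    {t x : ℝ} (ht : 0 ≤ t) (hx : 0 ≤ x) :
    |ψ t - ψ x| ≤ ω + (2*M/a + a/(2*h^2)*ω) * |t - x| + ω/(2*h^2) * (t - x)^2 := by
  rcases le_total x t with hle | hle
  · have hL : 0 ≤ t - x := sub_nonneg.mpr hle
    have := pointwise_est ψ M ω a h ha hh hM hω hx hL
    rw [show x + (t - x) = t by ring] at this
    rw [abs_of_nonneg hL]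
    exact this
  · have hL : 0 ≤ x - t := sub_nonneg.mpr hle
    have := pointwise_est ψ M ω a h ha hh hM hω ht hL
    rw [show t + (x - t) = x by ring] at this
    rw [abs_sub_comm (ψ t) (ψ x), abs_sub_comm t x, abs_of_nonneg hL,
      show (t - x)^2 = (x - t)^2 by ring]
    exact this

end Pointwise

set_option maxHeartbeats 2000000

/-- estimate via the second-order modulus of continuity. -/
theorem Kop_rate_second_modulus (μ : ℝ) (hμ : 0 ≤ μ) (c : ℕ → ℝ) (hc0 : c 0 ≠ 0)
    (hQ : ∀ t : ℝ, Summable fun i : ℕ => |c i * t ^ i / gammaMu μ i|)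
    (hq : ∀ i : ℕ, ∀ x : ℝ, 0 ≤ x → 0 ≤ qPoly μ c i x)
    (hQ1 : 0 < Qf μ c 1)
    (n : ℕ) (hn : 1 ≤ n)
    (ψ : ℝ → ℝ) (hψ : ContinuousOn ψ (Set.Ici 0))
    (Mψ : ℝ) (hMψ : IsLUB {y : ℝ | ∃ t : ℝ, 0 ≤ t ∧ y = |ψ t|} Mψ)
    (a : ℝ) (ha : 0 < a) (x : ℝ) (hx : x ∈ Set.Icc 0 a)
    (hψs : Summable fun i : ℕ =>
      |qPoly μ c i (n * x) / gammaMu μ i * ψ (((i : ℝ) + 2 * μ * thetaFn i) / n)|)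
    (h2 : Summable fun i : ℕ =>
      |qPoly μ c i (n * x) / gammaMu μ i * ((((i : ℝ) + 2 * μ * thetaFn i) / n - x) ^ 2)|) :
    |Kop μ c n ψ x - ψ x| ≤
      3 / 4 * (2 + a + ((Kop μ c n (fun ξ => (ξ - x) ^ 2) x) ^ ((1 : ℝ) / 4)) ^ 2) *
          modulusOfContinuity2 ψ ((Kop μ c n (fun ξ => (ξ - x) ^ 2) x) ^ ((1 : ℝ) / 4)) +
        2 * ((Kop μ c n (fun ξ => (ξ - x) ^ 2) x) ^ ((1 : ℝ) / 4)) ^ 2 / a * Mψ := by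
  obtain ⟨hx0, hxa⟩ := hx
  have hn0 : (0:ℝ) < (n:ℝ) := by exact_mod_cast Nat.lt_of_lt_of_le Nat.zero_lt_one hn
  have hy : (0:ℝ) ≤ (n:ℝ) * x := by positivity
  have hGpos : ∀ i, 0 < gammaMu μ i := gammaMu_pos hμ
  -- abbreviations (definitionally transparent)
  set T : ℕ → ℝ := fun i => qPoly μ c i ((n:ℝ) * x) / gammaMu μ i with hTdef
  set xi : ℕ → ℝ := fun i => ((i : ℝ) + 2 * μ * thetaFn i) / (n:ℝ) with hxidef
  have hT0 : ∀ i, 0 ≤ T i := fun i => div_nonneg (hq i _ hy) (hGpos i).le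
  have hxi0 : ∀ i, 0 ≤ xi i := by
    intro i
    have hθ : 0 ≤ thetaFn i := by unfold thetaFn; split <;> norm_num
    have : (0:ℝ) ≤ (i : ℝ) + 2 * μ * thetaFn i := by positivity
    exact div_nonneg this hn0.le
  -- Cauchy product : ∑ T = Qf 1 * dunklExp (n x)
  have hFnorm : Summable (fun i => ‖c i / gammaMu μ i‖) := by
    simpa only [Real.norm_eq_abs, one_pow, mul_one] using hQ 1
  have hGsnorm : Summable (fun i => ‖((n:ℝ)*x) ^ i / gammaMu μ i‖) := by
    simpa only [Real.norm_eq_abs] using summable_abs_pow_div_gammaMu hμ hy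
  have hTeq : T = fun i => ∑ k ∈ Finset.range (i+1),
      (c k / gammaMu μ k) * (((n:ℝ)*x) ^ (i - k) / gammaMu μ (i - k)) := by
    funext i
    have h1 : T i = ∑ j ∈ Finset.range (i+1),
        (c (i - j) / gammaMu μ (i - j)) * (((n:ℝ)*x) ^ j / gammaMu μ j) := by
      rw [hTdef]
      simp only [qPoly, Finset.sum_div]
      refine Finset.sum_congr rfl (fun j hj => ?_)
      have g1 := (hGpos i).ne'
      have g2 := (hGpos j).ne'
      have g3 := (hGpos (i - j)).ne'
      field_simp
    rw [h1, ← Finset.sum_range_reflect]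
    refine Finset.sum_congr rfl (fun j hj => ?_)
    have hj' : j ≤ i := by
      have := Finset.mem_range.mp hj; omega
    have e1 : i + 1 - 1 - j = i - j := by omega
    have e2 : i - (i - j) = j := by omega
    simp only [e1, e2]
  have hTsum : Summable T := by
    rw [hTeq]
    exact (summable_norm_sum_mul_range_of_summable_norm hFnorm hGsnorm).of_norm
  have hTval : ∑' i, T i = Qf μ c 1 * dunklExp μ ((n:ℝ) * x) := by
    have hmul := tsum_mul_tsum_eq_tsum_sum_range_of_summable_norm hFnorm hGsnorm
    have hQf : Qf μ c 1 = ∑' i, c i / gammaMu μ i := by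
      unfold Qf; congr 1; funext i; rw [one_pow, mul_one]
    have hDE : dunklExp μ ((n:ℝ) * x) = ∑' i, ((n:ℝ)*x) ^ i / gammaMu μ i := rfl
    rw [hTeq, hQf, hDE, ← hmul]
  -- positivity of normalizer
  have hE1 : (1:ℝ) ≤ dunklExp μ ((n:ℝ) * x) := by
    have hsum : Summable (fun i => ((n:ℝ)*x) ^ i / gammaMu μ i) := by
      refine Summable.of_abs ?_
      exact summable_abs_pow_div_gammaMu hμ hy
    have h0 : ((n:ℝ)*x) ^ 0 / gammaMu μ 0 = 1 := by
      rw [pow_zero, gammaMu_zero hμ]; norm_num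
    have := Summable.le_tsum hsum 0 (fun j _ => div_nonneg (pow_nonneg hy j) (hGpos j).le)
    rw [h0] at this
    exact this
  have hD : (0:ℝ) < Qf μ c 1 * dunklExp μ ((n:ℝ) * x) := by
    have := mul_le_mul_of_nonneg_left hE1 hQ1.le
    nlinarith [hQ1]
  set D : ℝ := Qf μ c 1 * dunklExp μ ((n:ℝ) * x) with hDdef
  have hKop : ∀ f : ℝ → ℝ, Kop μ c n f x = 1/D * ∑' i, T i * f (xi i) := fun f => rfl
  -- second moment
  have hVsum : Summable (fun i => T i * (xi i - x)^2) := h2.of_abs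
  have hV0 : (0:ℝ) ≤ ∑' i, T i * (xi i - x)^2 :=
    tsum_nonneg (fun i => mul_nonneg (hT0 i) (sq_nonneg _))
  set V : ℝ := ∑' i, T i * (xi i - x)^2 with hVdef
  have hKmomEq : Kop μ c n (fun ξ => (ξ - x)^2) x = 1/D * V := hKop _
  have hKmom0 : 0 ≤ Kop μ c n (fun ξ => (ξ - x)^2) x := by
    rw [hKmomEq]; positivity
  set Km : ℝ := Kop μ c n (fun ξ => (ξ - x)^2) x with hKmdef
  have hVKm : V = D * Km := by
    rw [hKmomEq]; field_simp
  -- bound facts for ψ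
  have hMb : ∀ t, 0 ≤ t → |ψ t| ≤ Mψ := fun t ht => hMψ.1 ⟨t, ht, rfl⟩
  have hM0 : 0 ≤ Mψ := (abs_nonneg _).trans (hMb 0 le_rfl)
  have hw2 : ∀ δ : ℝ, 0 ≤ δ → ∀ τ g : ℝ, 0 ≤ τ → 0 ≤ g → g ≤ δ →
      |ψ (τ + 2*g) - 2 * ψ (τ + g) + ψ τ| ≤ modulusOfContinuity2 ψ δ := by
    intro δ hδ τ g hτ hg hgδ
    apply le_csSup
    · refine ⟨4*Mψ, ?_⟩
      rintro b ⟨t', h', ht', hh0', hh'δ, rfl⟩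
      have b1 := hMb (t' + 2*h') (by linarith)
      have b2 := hMb (t' + h') (by linarith)
      have b3 := hMb t' ht'
      calc |ψ (t' + 2*h') - 2 * ψ (t'+h') + ψ t'|
          ≤ |ψ (t' + 2*h') - 2 * ψ (t'+h')| + |ψ t'| := abs_add_le _ _
      _ ≤ (|ψ (t' + 2*h')| + |2 * ψ (t'+h')|) + |ψ t'| :=
            add_le_add_left (abs_sub _ _) _
      _ = |ψ (t' + 2*h')| + 2 * |ψ (t'+h')| + |ψ t'| := by rw [abs_mul, abs_two]
      _ ≤ 4*Mψ := by linarith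
    · exact ⟨τ, g, hτ, hg, hgδ, rfl⟩
  have hw20 : ∀ δ : ℝ, 0 ≤ δ → 0 ≤ modulusOfContinuity2 ψ δ := by
    intro δ hδ
    have := hw2 δ hδ 0 0 le_rfl le_rfl hδ
    exact (abs_nonneg _).trans this
  set s : ℝ := Km ^ ((1:ℝ)/4) with hsdef
  have hs0 : 0 ≤ s := Real.rpow_nonneg hKmom0 _
  rcases eq_or_lt_of_le hKmom0 with hKz | hKpos
  · -- degenerate case: zero second moment
    have hV0' : V = 0 := by rw [hVKm, ← hKz]; ring
    have hterm : ∀ i, T i * (xi i - x)^2 = 0 := by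
      intro i
      have hle := Summable.le_tsum hVsum i (fun j _ => mul_nonneg (hT0 j) (sq_nonneg _))
      have hge := mul_nonneg (hT0 i) (sq_nonneg (xi i - x))
      rw [← hVdef] at hle
      linarith [hle, hge, hV0'.le, hV0'.ge]
    have hψeq : ∀ i, T i * ψ (xi i) = T i * ψ x := by
      intro i
      rcases mul_eq_zero.mp (hterm i) with h | h
      · rw [h, zero_mul, zero_mul]
      · have : xi i = x := by nlinarith [sq_nonneg (xi i - x)]
        rw [this]
      
    have hKψ : Kop μ c n ψ x = ψ x := by
      rw [hKop ψ]
      have : ∑' i, T i * ψ (xi i) = ∑' i, T i * ψ x := by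
        congr 1; funext i; exact hψeq i
      rw [this, tsum_mul_right, hTval]
      field_simp
    rw [hKψ, sub_self, abs_zero]
    have w0 := hw20 s hs0
    have : 0 ≤ 3 / 4 * (2 + a + s^2) * modulusOfContinuity2 ψ s := by
      apply mul_nonneg _ w0
      nlinarith [sq_nonneg s]
    have h2' : 0 ≤ 2 * s^2 / a * Mψ := by positivity
    linarith
  · -- main case: positive second moment
    have hs : 0 < s := Real.rpow_pos_of_pos hKpos _
    have hs2 : 0 < s^2 := by positivity
    have s4val : (s^2)^2 = Km := by
      rw [hsdef, ← Real.rpow_natCast (Km ^ ((1:ℝ)/4)) 2, ← Real.rpow_mul hKmom0,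
        ← Real.rpow_natCast (Km ^ ((1:ℝ)/4 * (2:ℕ))) 2, ← Real.rpow_mul hKmom0]
      norm_num
    set ω : ℝ := modulusOfContinuity2 ψ s with hωdef
    have hωs := hw2 s hs0
    have hω0 : 0 ≤ ω := hw20 s hs0
    set C1 : ℝ := 2*Mψ/a + a/(2*s^2)*ω with hC1def
    set C2 : ℝ := ω/(2*s^2) with hC2def
    have hC10 : 0 ≤ C1 := by rw [hC1def]; positivity
    have hC20 : 0 ≤ C2 := by rw [hC2def]; positivity
    -- pointwise estimate for every index
    have hpt : ∀ i, |T i * ψ (xi i) - T i * ψ x|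
        ≤ ω * T i + C1 * (T i * |xi i - x|) + C2 * (T i * (xi i - x)^2) := by
      intro i
      have hest := pointwise_est' ψ Mψ ω a s ha hs hMb hωs (hxi0 i) hx0
      have h1 : |T i * ψ (xi i) - T i * ψ x| = T i * |ψ (xi i) - ψ x| := by
        rw [← mul_sub, abs_mul, abs_of_nonneg (hT0 i)]
      rw [h1]
      calc T i * |ψ (xi i) - ψ x|
          ≤ T i * (ω + (2*Mψ/a + a/(2*s^2)*ω) * |xi i - x| + ω/(2*s^2) * (xi i - x)^2) :=
            mul_le_mul_of_nonneg_left hest (hT0 i)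
      _ = ω * T i + C1 * (T i * |xi i - x|) + C2 * (T i * (xi i - x)^2) := by
            rw [hC1def, hC2def]; ring
    -- summability
    have hsum1 : Summable (fun i => T i * ψ (xi i)) := hψs.of_abs
    have hsum2 : Summable (fun i => T i * ψ x) := hTsum.mul_right (ψ x)
    have hsumU : Summable (fun i => T i * |xi i - x|) := by
      refine Summable.of_nonneg_of_le
        (fun i => mul_nonneg (hT0 i) (abs_nonneg _)) (fun i => ?_)
        (((hTsum.add hVsum).div_const 2))
      have hu : |xi i - x| ≤ (1 + (xi i - x)^2)/2 := by
        nlinarith [sq_nonneg (|xi i - x| - 1), sq_abs (xi i - x)]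
      calc T i * |xi i - x| ≤ T i * ((1 + (xi i - x)^2)/2) :=
            mul_le_mul_of_nonneg_left hu (hT0 i)
      _ = (T i + T i * (xi i - x)^2)/2 := by ring
    have hsumabs : Summable (fun i => |T i * ψ (xi i) - T i * ψ x|) := by
      refine Summable.of_nonneg_of_le (fun i => abs_nonneg _) (fun i => abs_sub _ _)
        (hψs.add hsum2.abs)
    have hsumRHS : Summable (fun i =>
        ω * T i + C1 * (T i * |xi i - x|) + C2 * (T i * (xi i - x)^2)) :=
      ((hTsum.mul_left ω).add (hsumU.mul_left C1)).add (hVsum.mul_left C2)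
    -- the difference as a single sum
    have hKopEq : Kop μ c n ψ x - ψ x = 1/D * (∑' i, (T i * ψ (xi i) - T i * ψ x)) := by
      rw [Summable.tsum_sub hsum1 hsum2, hKop ψ]
      have hX : ∑' i, T i * ψ x = D * ψ x := by
        rw [tsum_mul_right, hTval]
      rw [hX]
      field_simp
    -- estimate
    have habs1 : |Kop μ c n ψ x - ψ x| ≤ 1/D * ∑' i, |T i * ψ (xi i) - T i * ψ x| := by
      rw [hKopEq, abs_mul, abs_of_pos (by positivity : (0:ℝ) < 1/D)]
      apply mul_le_mul_of_nonneg_left _ (by positivity : (0:ℝ) ≤ 1/D)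
      have := norm_tsum_le_tsum_norm (f := fun i => T i * ψ (xi i) - T i * ψ x) ?_
      · simpa using this
      · simpa using hsumabs
    have habs2 : ∑' i, |T i * ψ (xi i) - T i * ψ x|
        ≤ ω * (∑' i, T i) + C1 * (∑' i, T i * |xi i - x|) + C2 * V := by
      calc ∑' i, |T i * ψ (xi i) - T i * ψ x|
          ≤ ∑' i, (ω * T i + C1 * (T i * |xi i - x|) + C2 * (T i * (xi i - x)^2)) :=
            Summable.tsum_le_tsum hpt hsumabs hsumRHS
      _ = ω * (∑' i, T i) + C1 * (∑' i, T i * |xi i - x|) + C2 * V := by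
            rw [Summable.tsum_add ((hTsum.mul_left ω).add (hsumU.mul_left C1)) (hVsum.mul_left C2),
              Summable.tsum_add (hTsum.mul_left ω) (hsumU.mul_left C1),
              tsum_mul_left, tsum_mul_left, tsum_mul_left, hVdef]
    have habs3 : ∑' i, T i * |xi i - x| ≤ (s^2 * D + V/(s^2))/2 := by
      have hptU : ∀ i, T i * |xi i - x| ≤ (s^2 * T i + (T i * (xi i - x)^2)/(s^2))/2 := by
        intro i
        have hu : |xi i - x| ≤ (s^2 + (xi i - x)^2/(s^2))/2 := by
          have h2s : (0:ℝ) < 2 * s^2 := by positivity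
          rw [show (s^2 + (xi i - x)^2/(s^2))/2
              = ((s^2)^2 + (xi i - x)^2)/(2*s^2) by field_simp]
          rw [le_div_iff₀ h2s]
          nlinarith [sq_nonneg (|xi i - x| - s^2), sq_abs (xi i - x)]
        calc T i * |xi i - x| ≤ T i * ((s^2 + (xi i - x)^2/(s^2))/2) :=
              mul_le_mul_of_nonneg_left hu (hT0 i)
        _ = (s^2 * T i + (T i * (xi i - x)^2)/(s^2))/2 := by ring
      have hsum' : Summable (fun i => (s^2 * T i + (T i * (xi i - x)^2)/(s^2))/2) :=
        ((hTsum.mul_left (s^2)).add (hVsum.div_const (s^2))).div_const 2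
      calc ∑' i, T i * |xi i - x|
          ≤ ∑' i, (s^2 * T i + (T i * (xi i - x)^2)/(s^2))/2 :=
            Summable.tsum_le_tsum hptU hsumU hsum'
      _ = (s^2 * D + V/(s^2))/2 := by
          rw [tsum_div_const, Summable.tsum_add (hTsum.mul_left (s^2)) (hVsum.div_const (s^2)),
            tsum_mul_left, tsum_div_const, hTval, hVdef]
    -- put everything together
    have hb : ∑' i, |T i * ψ (xi i) - T i * ψ x|
        ≤ ω * D + C1 * ((s^2 * D + V/(s^2))/2) + C2 * V := by
      have h3 := mul_le_mul_of_nonneg_left habs3 hC10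
      rw [hTval] at habs2
      exact habs2.trans (add_le_add (add_le_add le_rfl h3) le_rfl)
    have hXle : 1/D * (ω * D + C1 * ((s^2 * D + V/(s^2))/2) + C2 * V)
        = ω + C1 * s^2 + C2 * (s^2)^2 := by
      rw [hVKm, ← s4val]
      field_simp
      ring
    have hmono : |Kop μ c n ψ x - ψ x| ≤ ω + C1 * s^2 + C2 * (s^2)^2 := by
      calc |Kop μ c n ψ x - ψ x| ≤ 1/D * ∑' i, |T i * ψ (xi i) - T i * ψ x| := habs1
      _ ≤ 1/D * (ω * D + C1 * ((s^2 * D + V/(s^2))/2) + C2 * V) :=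
          mul_le_mul_of_nonneg_left hb (by positivity)
      _ = ω + C1 * s^2 + C2 * (s^2)^2 := hXle
    have hexp : ω + C1 * s^2 + C2 * (s^2)^2 = ω + 2*Mψ*s^2/a + a*ω/2 + ω*s^2/2 := by
      rw [hC1def, hC2def]
      field_simp
      ring
    rw [hexp] at hmono
    have haω : 0 ≤ a * ω := mul_nonneg ha.le hω0
    have hsω : 0 ≤ s^2 * ω := mul_nonneg hs2.le hω0
    have hgoal : ω + 2*Mψ*s^2/a + a*ω/2 + ω*s^2/2
        ≤ 3 / 4 * (2 + a + s^2) * ω + 2 * s^2 / a * Mψ := by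
      have heq : (2:ℝ)*Mψ*s^2/a = 2 * s^2 / a * Mψ := by ring
      rw [heq]
      nlinarith [haω, hsω]
    linarith [hmono, hgoal]
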